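/- Consider the brick wall tiling of the plane with 4 colors: tiles are axis-parallel unit squares, rows of adjacent squares where odd rows alternate colors 1,2 and even rows (placed directly below) alternate colors 3,4 with a shift of 2. The minimal distance between two same-colored points in different tiles is exactly 1, hence the fault tolerance of this consistent rounding scheme is 1/2. -/

import Mathlib

/-- The unit square tile with lower-left corner `(i, j) ∈ ℤ²`. -/
def unitSquare (i j : ℤ) : Set (EuclideanSpace ℝ (Fin 2)) :=
  {x | x 0 ∈ Set.Icc (i : ℝ) ((i : ℝ) + 1) ∧ x 1 ∈ Set.Icc (j : ℝ) ((j : ℝ) + 1)}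

/-- The 4-coloring of the unit squares: rows with even `j` alternate two colors and rows
with odd `j` alternate the other two colors (colors 1,2 on odd rows and 3,4 shifted by 2 on
even rows); equivalently, the color of the square `(i, j)` is `(i mod 2, j mod 2)`. -/
def squareColor (i j : ℤ) : ZMod 2 × ZMod 2 := ((i : ZMod 2), (j : ZMod 2))

lemma coord_le_dist (x y : EuclideanSpace ℝ (Fin 2)) (k : Fin 2) :
    dist (x k) (y k) ≤ dist x y := by
  rw [EuclideanSpace.dist_eq]
  rw [show dist (x k) (y k) = Real.sqrt (dist (x k) (y k) ^ 2) by
    rw [Real.sqrt_sq dist_nonneg]]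
  apply Real.sqrt_le_sqrt
  exact Finset.single_le_sum (f := fun i => dist (x i) (y i) ^ 2)
    (fun i _ => sq_nonneg _) (Finset.mem_univ k)

/-- In the 4-colored brick wall tiling of ℝ² by unit squares, the minimal
Euclidean distance between two same-colored points in different tiles is exactly 1
(hence the fault tolerance of the scheme is 1/2). -/
theorem stmt_6 :
    IsLeast {d : ℝ | ∃ i j i' j' : ℤ, (i, j) ≠ (i', j') ∧
        squareColor i j = squareColor i' j' ∧
        ∃ x ∈ unitSquare i j, ∃ y ∈ unitSquare i' j', d = dist x y} 1 := by
  constructor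
  · refine ⟨0, 0, 2, 0, by decide, by decide, !₂[1, 0], ?_, !₂[2, 0], ?_, ?_⟩
    · constructor <;> norm_num [unitSquare]
    · constructor <;> norm_num [unitSquare]
    · rw [EuclideanSpace.dist_eq, Fin.sum_univ_two]
      norm_num [Real.dist_eq]
  · rintro d ⟨i, j, i', j', hne, hc, x, hx, y, hy, rfl⟩
    have hc1 : i ≡ i' [ZMOD 2] := (ZMod.intCast_eq_intCast_iff _ _ _).mp (congrArg Prod.fst hc)
    have hc2 : j ≡ j' [ZMOD 2] := (ZMod.intCast_eq_intCast_iff _ _ _).mp (congrArg Prod.snd hc)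
    have key : ∀ (a b : ℤ) (u v : ℝ), a ≡ b [ZMOD 2] → a ≠ b →
        u ∈ Set.Icc (a : ℝ) ((a : ℝ) + 1) → v ∈ Set.Icc (b : ℝ) ((b : ℝ) + 1) →
        1 ≤ dist u v := by
      intro a b u v hab hne hu hv
      have hd : (2 : ℤ) ∣ b - a := Int.ModEq.dvd hab
      have h2 : 2 ≤ |b - a| := by
        rcases hd with ⟨c, hcc⟩
        have hc0 : c ≠ 0 := by rintro rfl; simp at hcc; omega
        rw [hcc, abs_mul]
        have : 1 ≤ |c| := Int.one_le_abs hc0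
        simp [abs_of_nonneg]; omega
      rw [Real.dist_eq]
      rcases le_or_gt b a with h | h
      · have : (2:ℤ) ≤ a - b := by rw [abs_sub_comm] at h2; rwa [abs_of_nonneg (by omega)] at h2
        have : (2:ℝ) ≤ (a:ℝ) - b := by exact_mod_cast this
        have := hu.1; have := hv.2
        rw [abs_of_nonneg (by linarith)]; linarith
      · have : (2:ℤ) ≤ b - a := by rwa [abs_of_nonneg (by omega)] at h2
        have : (2:ℝ) ≤ (b:ℝ) - a := by exact_mod_cast this
        have := hu.2; have := hv.1
        rw [abs_of_nonpos (by linarith)]; linarith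
    have hne' : i ≠ i' ∨ j ≠ j' := by
      by_contra h; push_neg at h; exact hne (by rw [h.1, h.2])
    rcases hne' with h | h
    · exact le_trans (key i i' (x 0) (y 0) hc1 h hx.1 hy.1) (coord_le_dist x y 0)
    · exact le_trans (key j j' (x 1) (y 1) hc2 h hx.2 hy.2) (coord_le_dist x y 1)
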